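/- Let A be a symmetric n×n matrix with entries in {0,1}, with eigenvalues λ_1 ≥ ⋯ ≥ λ_n, satisfying λ_2(A) − λ_n(A) = n/√2. Then n is divisible by 4, all row sums of A equal n/2 (the corresponding graph is regular of degree n/2), and the trace of A equals n/2 (exactly half of the vertices carry a self-loop). -/

import Mathlib

open Matrix

set_option maxHeartbeats 1000000

private theorem aux_trace_pow_spectral {n : ℕ} (U : Matrix (Fin n) (Fin n) ℝ) (d : Fin n → ℝ)
    (h2 : star U * U = 1) (k : ℕ) (hk : 0 < k) :
    trace ((U * diagonal d * star U)^k) = ∑ i, (d i)^k := by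
  have cancel : ∀ X : Matrix (Fin n) (Fin n) ℝ, star U * (U * X) = X := by
    intro X; rw [← Matrix.mul_assoc, h2, Matrix.one_mul]
  have key : ∀ k : ℕ, 0 < k →
      (U * diagonal d * star U)^k = U * diagonal (fun i => d i ^ k) * star U := by
    intro k hk
    induction k with
    | zero => omega
    | succ m ih =>
      rcases Nat.eq_zero_or_pos m with hm | hm
      · subst hm; simp
      · rw [pow_succ, ih hm]
        simp only [Matrix.mul_assoc]
        rw [cancel]
        rw [← Matrix.mul_assoc (diagonal (fun i => d i ^ m)) (diagonal d) (star U)]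
        rw [diagonal_mul_diagonal]
        simp [pow_succ, Matrix.mul_assoc]
  rw [key k hk, Matrix.trace_mul_cycle, h2, Matrix.one_mul, trace_diagonal]

private theorem aux_quad_form_spectral {n : ℕ} (U : Matrix (Fin n) (Fin n) ℝ)
    (d : Fin n → ℝ) (v : Fin n → ℝ) :
    v ⬝ᵥ ((U * diagonal d * star U) *ᵥ v)
      = ∑ i, d i * ((star U *ᵥ v) i)^2 := by
  set c := star U *ᵥ v with hc
  have hvU : v ᵥ* U = c := by
    rw [hc, Matrix.star_eq_conjTranspose, conjTranspose_eq_transpose_of_trivial,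
      Matrix.mulVec_transpose]
  rw [← Matrix.mulVec_mulVec, ← Matrix.mulVec_mulVec, Matrix.dotProduct_mulVec, hvU]
  simp only [dotProduct, Matrix.mulVec_diagonal, ← hc]
  exact Finset.sum_congr rfl fun i _ => by ring

private theorem aux_dot_self_spectral {n : ℕ} (U : Matrix (Fin n) (Fin n) ℝ) (v : Fin n → ℝ)
    (h1 : U * star U = 1) :
    ∑ i, ((star U *ᵥ v) i)^2 = v ⬝ᵥ v := by
  have h1' : U * Uᵀ = 1 := by
    rw [← conjTranspose_eq_transpose_of_trivial, ← Matrix.star_eq_conjTranspose]; exact h1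
  have : (star U *ᵥ v) ⬝ᵥ (star U *ᵥ v) = v ⬝ᵥ v := by
    rw [Matrix.dotProduct_mulVec, ← Matrix.mulVec_transpose,
      Matrix.star_eq_conjTranspose, conjTranspose_eq_transpose_of_trivial,
      transpose_transpose, Matrix.mulVec_mulVec, h1', Matrix.one_mulVec]
  rw [← this]
  simp [dotProduct, sq]

private theorem aux_mulVec_spectral_eig {n : ℕ} (U : Matrix (Fin n) (Fin n) ℝ) (d : Fin n → ℝ)
    (v : Fin n → ℝ) (t : ℝ) (h1 : U * star U = 1)
    (h : ∀ i, d i * (star U *ᵥ v) i = t * (star U *ᵥ v) i) :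
    (U * diagonal d * star U) *ᵥ v = t • v := by
  set c := star U *ᵥ v with hc
  have hd : diagonal d *ᵥ c = t • c := by
    ext i; simp [mulVec_diagonal, h i]
  rw [← Matrix.mulVec_mulVec, ← Matrix.mulVec_mulVec, ← hc, hd, Matrix.mulVec_smul,
    Matrix.mulVec_mulVec, h1, Matrix.one_mulVec]

private theorem aux_sum_comp_of_multiset_eq {n : ℕ} (μ ν : Fin n → ℝ)
    (h : Finset.univ.val.map μ = Finset.univ.val.map ν) (f : ℝ → ℝ) :
    ∑ i, f (μ i) = ∑ i, f (ν i) := by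
  have h1 : (Finset.univ.val.map μ).map f = (Finset.univ.val.map ν).map f := by rw [h]
  have h2 := congrArg Multiset.sum h1
  simpa [Finset.sum, Multiset.map_map, Function.comp_def] using h2

/-- If a symmetric `n × n` `(0,1)`-matrix `A`, with eigenvalues `μ` in
nonincreasing order, satisfies `λ_2(A) - λ_n(A) = n / √2`, then `4 ∣ n`, every row sum of `A`
equals `n/2` (the graph is `n/2`-regular), and the trace of `A` is `n/2` (exactly half the
vertices carry a self-loop). -/
theorem spread_10_equality_structure (n : ℕ) (hn : 2 ≤ n)
    (A : Matrix (Fin n) (Fin n) ℝ) (hA : A.IsHermitian)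
    (hA01 : ∀ a b, A a b = 0 ∨ A a b = 1)
    (μ : Fin n → ℝ) (hmono : Antitone μ)
    (hperm : Finset.univ.val.map μ = Finset.univ.val.map hA.eigenvalues)
    (heq : μ ⟨1, by omega⟩ - μ ⟨n - 1, by omega⟩ = (n : ℝ) / Real.sqrt 2) :
    4 ∣ n ∧ (∀ a, ∑ b, A a b = (n : ℝ) / 2) ∧ A.trace = (n : ℝ) / 2 := by
  have hs2 : (0:ℝ) < Real.sqrt 2 := by positivity
  -- n ≥ 3
  have hn3 : 3 ≤ n := by
    by_contra h
    have hn2 : n = 2 := by omega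
    subst hn2
    have hidx : (⟨2 - 1, by omega⟩ : Fin 2) = ⟨1, by omega⟩ := rfl
    rw [hidx, sub_self] at heq
    have hpos : (0:ℝ) < ((2:ℕ):ℝ) / Real.sqrt 2 := div_pos (by norm_num) hs2
    rw [← heq] at hpos
    exact lt_irrefl 0 hpos
  have hn0 : (0:ℝ) < n := by exact_mod_cast Nat.lt_of_lt_of_le (by norm_num) hn3
  set lam := hA.eigenvalues with hlam
  set U := (hA.eigenvectorUnitary : Matrix (Fin n) (Fin n) ℝ) with hU
  have h1 : U * star U = 1 := (Matrix.mem_unitaryGroup_iff).mp hA.eigenvectorUnitary.2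
  have h2 : star U * U = 1 := (Matrix.mem_unitaryGroup_iff').mp hA.eigenvectorUnitary.2
  have hspec : A = U * diagonal lam * star U := by
    simpa using hA.spectral_theorem
  set v : Fin n → ℝ := fun _ => 1 with hv
  set c : Fin n → ℝ := star U *ᵥ v with hc
  set S : ℝ := ∑ a, ∑ b, A a b with hS
  -- basic sums
  have hsum : ∀ f : ℝ → ℝ, ∑ i, f (μ i) = ∑ i, f (lam i) :=
    aux_sum_comp_of_multiset_eq μ lam hperm
  have hsym : ∀ a b, A b a = A a b := fun a b => by simpa using hA.apply a b
  have hidem : ∀ a b, A a b * A a b = A a b := fun a b => by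
    rcases hA01 a b with h | h <;> simp [h]
  -- quadratic form
  have hquad : v ⬝ᵥ (A *ᵥ v) = ∑ i, lam i * (c i)^2 := by
    rw [hspec]; exact aux_quad_form_spectral U lam v
  have hSv : v ⬝ᵥ (A *ᵥ v) = S := by
    simp [hS, dotProduct, Matrix.mulVec, hv]
  have hcc : ∑ i, (c i)^2 = n := by
    rw [hc, aux_dot_self_spectral U v h1]
    simp [dotProduct, hv]
  -- trace of powers
  have htrpow : ∀ k : ℕ, 0 < k → trace (A^k) = ∑ i, (lam i)^k := by
    intro k hk
    rw [hspec]; exact aux_trace_pow_spectral U lam h2 k hk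
  have htr2 : ∑ i, (lam i)^2 = S := by
    rw [← htrpow 2 (by norm_num), pow_two]
    simp only [Matrix.trace, Matrix.diag, Matrix.mul_apply, hS]
    exact Finset.sum_congr rfl fun a _ => Finset.sum_congr rfl fun b _ => by
      rw [hsym a b, hidem a b]
  -- notation for key eigenvalues
  set x := μ ⟨0, by omega⟩ with hxdef
  set y := μ ⟨1, by omega⟩ with hydef
  set z := μ ⟨n - 1, by omega⟩ with hzdef
  have hmax : ∀ i, lam i ≤ x := by
    intro i
    have hmem : lam i ∈ Finset.univ.val.map μ := by
      rw [hperm]; exact Multiset.mem_map_of_mem lam (Finset.mem_univ i)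
    obtain ⟨j, _, hj⟩ := Multiset.mem_map.mp hmem
    rw [← hj]
    exact hmono (by simp [Fin.le_def])
  -- Rayleigh: S ≤ x * n
  have hRay : S ≤ x * n := by
    have h1' : ∑ i, lam i * (c i)^2 ≤ ∑ i, x * (c i)^2 :=
      Finset.sum_le_sum fun i _ => mul_le_mul_of_nonneg_right (hmax i) (sq_nonneg _)
    calc S = ∑ i, lam i * (c i)^2 := by rw [← hSv, hquad]
      _ ≤ ∑ i, x * (c i)^2 := h1'
      _ = x * n := by rw [← Finset.mul_sum, hcc]
  -- the three distinguished indices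
  have hne01 : (⟨0, by omega⟩ : Fin n) ≠ ⟨1, by omega⟩ := by simp [Fin.ext_iff]
  have hne0N : (⟨0, by omega⟩ : Fin n) ≠ ⟨n - 1, by omega⟩ := by simp [Fin.ext_iff]; omega
  have hne1N : (⟨1, by omega⟩ : Fin n) ≠ ⟨n - 1, by omega⟩ := by simp [Fin.ext_iff]; omega
  set s : Finset (Fin n) := {⟨0, by omega⟩, ⟨1, by omega⟩, ⟨n - 1, by omega⟩} with hsdef
  have hs_sum : ∀ f : ℝ → ℝ, ∑ i ∈ s, f (μ i) = f x + f y + f z := by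
    intro f
    rw [hsdef, Finset.sum_insert (by simp [hne01, hne0N]),
      Finset.sum_insert (by simp [hne1N]), Finset.sum_singleton]
    ring
  have hsq_tot : ∑ i, (μ i)^2 = S := by rw [hsum (·^2)]; exact htr2
  have hsplit : ∀ f : ℝ → ℝ, ∑ i ∈ s, f (μ i) + ∑ i ∈ sᶜ, f (μ i) = ∑ i, f (μ i) :=
    fun f => Finset.sum_add_sum_compl s _
  have hcompl_nonneg : ∑ i ∈ sᶜ, (μ i)^2 ≥ 0 := Finset.sum_nonneg fun i _ => sq_nonneg _
  have hsq : x^2 + y^2 + z^2 ≤ S := by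
    have := hsplit (·^2)
    have h' := hs_sum (·^2)
    linarith [hcompl_nonneg, hsq_tot]
  -- squared gap
  have heqsq : (y - z)^2 = (n:ℝ)^2 / 2 := by
    rw [heq]
    rw [div_pow, Real.sq_sqrt (by norm_num : (2:ℝ) ≥ 0)]
  -- the key identity
  have e0 : 2*(x - n/2)^2 + 2*(x*n - S) + 2*(S - x^2 - y^2 - z^2) + (y+z)^2 = 0 := by
    linear_combination -heqsq
  have t1 : (x - n/2)^2 = 0 := by
    linarith [sq_nonneg (x - n/2), sq_nonneg (y+z), hRay, hsq, e0]
  have hxS : x*n = S := by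
    linarith [sq_nonneg (x - n/2), sq_nonneg (y+z), hRay, hsq, e0]
  have hyz0 : (y+z)^2 = 0 := by
    linarith [sq_nonneg (x - n/2), sq_nonneg (y+z), hRay, hsq, e0]
  have hRzero : S = x^2 + y^2 + z^2 := by
    linarith [sq_nonneg (x - n/2), sq_nonneg (y+z), hRay, hsq, e0]
  have hxn : x = n/2 := by
    have := pow_eq_zero_iff (n := 2) (by norm_num) |>.mp t1
    linarith
  have hzy : z = -y := by
    have := pow_eq_zero_iff (n := 2) (by norm_num) |>.mp hyz0
    linarith
  have hy2 : y^2 = (n:ℝ)^2/8 := by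
    rw [hzy] at heqsq
    linear_combination heqsq / 4
  -- the rest of the eigenvalues vanish
  have hcompl_zero : ∀ i ∈ sᶜ, μ i = 0 := by
    have hcz : ∑ i ∈ sᶜ, (μ i)^2 = 0 := by
      have h1' := hsplit (·^2)
      have h2' := hs_sum (·^2)
      linarith [hsq_tot, hRzero]
    intro i hi
    have := (Finset.sum_eq_zero_iff_of_nonneg (fun i _ => sq_nonneg (μ i))).mp hcz i hi
    exact pow_eq_zero_iff (by norm_num) |>.mp this
  -- trace A
  have htrace : A.trace = (n:ℝ)/2 := by
    have ht1 : A.trace = ∑ i, lam i := by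
      have := htrpow 1 (by norm_num)
      simpa using this
    have h0 := hsum id
    simp only [id] at h0
    rw [ht1, ← h0]
    have h1' := hsplit id
    have h2' := hs_sum id
    have h3' : ∑ i ∈ sᶜ, id (μ i) = 0 := Finset.sum_eq_zero fun i hi => hcompl_zero i hi
    simp only [id] at h1' h2' h3' ⊢
    rw [← h1', h2', h3', hzy, hxn]; ring
  -- regularity
  have hreg : ∀ a, ∑ b, A a b = (n:ℝ)/2 := by
    have hterms : ∀ i, (x - lam i) * (c i)^2 = 0 := by
      have hsum0 : ∑ i, (x - lam i) * (c i)^2 = 0 := by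
        have : ∑ i, (x - lam i) * (c i)^2
            = x * (∑ i, (c i)^2) - ∑ i, lam i * (c i)^2 := by
          rw [Finset.mul_sum, ← Finset.sum_sub_distrib]
          exact Finset.sum_congr rfl fun i _ => by ring
        rw [this, hcc, ← hquad, hSv]
        linarith [hxS]
      intro i
      have hnn : ∀ i ∈ Finset.univ, 0 ≤ (x - lam i) * (c i)^2 := fun i _ =>
        mul_nonneg (by linarith [hmax i]) (sq_nonneg _)
      exact (Finset.sum_eq_zero_iff_of_nonneg hnn).mp hsum0 i (Finset.mem_univ i)
    have heig : ∀ i, lam i * c i = x * c i := by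
      intro i
      rcases mul_eq_zero.mp (hterms i) with h | h
      · have : lam i = x := by linarith
        rw [this]
      · have : c i = 0 := pow_eq_zero_iff (by norm_num) |>.mp h
        rw [this, mul_zero, mul_zero]
    have hAv : A *ᵥ v = x • v := by
      rw [hspec]
      exact aux_mulVec_spectral_eig U lam v x h1 fun i => heig i
    intro a
    have := congrFun hAv a
    simp [Matrix.mulVec, dotProduct, hv] at this
    rw [← hxn]
    simpa using this
  -- divisibility
  have hdvd : 4 ∣ n := by
    -- integer matrix
    set B : Matrix (Fin n) (Fin n) ℤ := fun a b => if A a b = 1 then 1 else 0 with hB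
    have hAB : A = B.map ((↑) : ℤ → ℝ) := by
      ext a b
      rcases hA01 a b with h | h <;> simp [hB, Matrix.map, h]
    have hA4 : A^4 = (B^4).map ((↑) : ℤ → ℝ) := by
      rw [hAB]
      have := map_pow ((Int.castRingHom ℝ).mapMatrix) B 4
      simpa [RingHom.mapMatrix_apply] using this.symm
    have htrB : trace (A^4) = ((trace (B^4) : ℤ) : ℝ) := by
      rw [hA4]
      simp [Matrix.trace, Matrix.map_apply, Matrix.diag]
    have htr4 : trace (A^4) = 3*(n:ℝ)^4/32 := by
      rw [htrpow 4 (by norm_num), ← hsum (·^4)]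
      have h1' := hsplit (·^4)
      have h2' := hs_sum (·^4)
      have h3' : ∑ i ∈ sᶜ, (μ i)^4 = 0 := Finset.sum_eq_zero fun i hi => by
        rw [hcompl_zero i hi]; norm_num
      rw [← h1', h2', h3', hzy, hxn]
      have hy4 : y^4 = (n:ℝ)^4/64 := by linear_combination (y^2 + (n:ℝ)^2/8) * hy2
      have : (-y)^4 = y^4 := by ring
      rw [this, hy4]
      ring
    have hint : (32 : ℤ) * trace (B^4) = 3 * (n:ℤ)^4 := by
      have : (32:ℝ) * ((trace (B^4) : ℤ) : ℝ) = 3 * (n:ℝ)^4 := by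
        rw [← htrB, htr4]; ring
      exact_mod_cast this
    have hdvd32 : (32 : ℕ) ∣ 3 * n^4 := by
      have : ((32:ℕ) : ℤ) ∣ ((3 * n^4 : ℕ) : ℤ) := by
        refine ⟨trace (B^4), ?_⟩
        push_cast
        linarith [hint]
      exact_mod_cast this
    have hdvd32' : (32 : ℕ) ∣ n^4 := by
      have hcop : Nat.Coprime 32 3 := by norm_num
      rw [mul_comm] at hdvd32
      exact hcop.dvd_of_dvd_mul_right hdvd32
    have h2n : 2 ∣ n := by
      have : (2:ℕ) ∣ n^4 := dvd_trans (by norm_num) hdvd32'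
      exact Nat.Prime.dvd_of_dvd_pow Nat.prime_two this
    obtain ⟨m, hm⟩ := h2n
    have h2m : 2 ∣ m := by
      obtain ⟨t, ht⟩ := hdvd32'
      have : m^4 = 2*t := by subst hm; ring_nf at ht ⊢; omega
      have : (2:ℕ) ∣ m^4 := ⟨t, this⟩
      exact Nat.Prime.dvd_of_dvd_pow Nat.prime_two this
    obtain ⟨p, hp⟩ := h2m
    exact ⟨p, by omega⟩
  exact ⟨hdvd, hreg, htrace⟩
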